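/- arXiv:1808.04209 — 3 statements merged into one kernel-verified Lean document; each statement's English description precedes it below -/
import Mathlib

section
/- Let p : Fin c → ℝ be a probability vector, θ : Fin c → ℝ, and for each i let U_i = diag(m ↦ exp(−i·θ_i·E_S m)) ⊗ diag(n ↦ exp(−i·θ_i·E_R n)). Let ρ_S, ρ_R be density matrices on Fin s, Fin r, set ρ = ρ_S ⊗ ρ_R, and assume the finite mixture realizes the global twirl: ∑_i p_i · U_i ρ U_i† = Πρ. Define the cq-state Ω on (Fin c) × (Fin s × Fin r) as the block-diagonal matrix whose i-th diagonal block is p_i · U_i ρ U_i† (all off-diagonal blocks zero), and define all marginals Ω_SR, Ω_S, Ω_R, Ω_SC, Ω_RC, Ω_C by entrywise partial traces (summing over the traced indices). Then the interaction information equals the mutual asymmetry: [S(Ω_S) + S(Ω_R) − S(Ω_SR)] − [S(Ω_SC) + S(Ω_RC) − S(Ω) − S(Ω_C)] = A(ρ_S) + A(ρ_R) − A(ρ_S ⊗ ρ_R). -/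
open Matrix Kronecker BigOperators ComplexOrder

/-- η(x) = −x·log x -/
noncomputable def entEta (x : ℝ) : ℝ := -x * Real.log x

/-- von Neumann entropy S(ρ) = ∑ η(λ_i(ρ)) using the eigenvalues from the
spectral theorem for Hermitian matrices. -/
noncomputable def vnEntropy {n : Type*} [Fintype n] [DecidableEq n] (ρ : Matrix n n ℂ) : ℝ :=
  if h : ρ.IsHermitian then ∑ i, entEta (h.eigenvalues i) else 0

/-- A density matrix: Hermitian, positive semidefinite, trace one. -/
def IsDensityMatrix {n : Type*} [Fintype n] [DecidableEq n] (ρ : Matrix n n ℂ) : Prop :=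
  ρ.IsHermitian ∧ ρ.PosSemidef ∧ ρ.trace = 1

/-- Pinching of a matrix by a function `f` on the index set. -/
def pinch {I : Type*} {α : Type*} [DecidableEq α] (f : I → α) (M : Matrix I I ℂ) :
    Matrix I I ℂ :=
  Matrix.of fun i j => if f i = f j then M i j else 0

/-- Relative entropy of asymmetry A(ρ) = S(P_f ρ) − S(ρ). -/
noncomputable def asym {I : Type*} [Fintype I] [DecidableEq I] {α : Type*} [DecidableEq α]
    (f : I → α) (ρ : Matrix I I ℂ) : ℝ :=
  vnEntropy (pinch f ρ) - vnEntropy ρ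

/-- Energy function of the global dephasing Π. -/
def globalE {s r : ℕ} (ES : Fin s → ℤ) (ER : Fin r → ℤ) : Fin s × Fin r → ℤ :=
  fun p => ES p.1 + ER p.2

/-- Energy function of the local dephasing Δ. -/
def localE {s r : ℕ} (ES : Fin s → ℤ) (ER : Fin r → ℤ) : Fin s × Fin r → ℤ × ℤ :=
  fun p => (ES p.1, ER p.2)

/-- Partial trace over the second factor. -/
noncomputable def ptraceSnd {a b : Type*} [Fintype b] (X : Matrix (a × b) (a × b) ℂ) :
    Matrix a a ℂ :=
  Matrix.of fun i i' => ∑ j, X (i, j) (i', j)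

/-- Partial trace over the first factor. -/
noncomputable def ptraceFst {a b : Type*} [Fintype a] (X : Matrix (a × b) (a × b) ℂ) :
    Matrix b b ℂ :=
  Matrix.of fun j j' => ∑ i, X (i, j) (i, j')

/-- The unitary U_θ = diag(exp(−iθE_S)) ⊗ diag(exp(−iθE_R)). -/
noncomputable def twirlU {s r : ℕ} (ES : Fin s → ℤ) (ER : Fin r → ℤ) (θ : ℝ) :
    Matrix (Fin s × Fin r) (Fin s × Fin r) ℂ :=
  (Matrix.diagonal fun m => Complex.exp (-Complex.I * θ * (ES m : ℂ))) ⊗ₖ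
    (Matrix.diagonal fun n => Complex.exp (-Complex.I * θ * (ER n : ℂ)))

/-- Marginal on C and S of a cq-state on C ⊗ (S ⊗ R) (tracing out R). -/
noncomputable def margSC {c s r : ℕ}
    (Ω : Matrix (Fin c × (Fin s × Fin r)) (Fin c × (Fin s × Fin r)) ℂ) :
    Matrix (Fin c × Fin s) (Fin c × Fin s) ℂ :=
  Matrix.of fun x y => ∑ n, Ω (x.1, (x.2, n)) (y.1, (y.2, n))

/-- Marginal on C and R of a cq-state on C ⊗ (S ⊗ R) (tracing out S). -/
noncomputable def margRC {c s r : ℕ}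
    (Ω : Matrix (Fin c × (Fin s × Fin r)) (Fin c × (Fin s × Fin r)) ℂ) :
    Matrix (Fin c × Fin r) (Fin c × Fin r) ℂ :=
  Matrix.of fun x y => ∑ m, Ω (x.1, (m, x.2)) (y.1, (m, y.2))

section AuxEntropy
open Polynomial

lemma entEta_mul (a b : ℝ) : entEta (a * b) = a * entEta b + b * entEta a := by
  rcases eq_or_ne a 0 with rfl | ha
  · simp [entEta]
  rcases eq_or_ne b 0 with rfl | hb
  · simp [entEta]
  · simp only [entEta, Real.log_mul ha hb]; ring

lemma charmatrix_unitary_conj {n : Type*} [Fintype n] [DecidableEq n]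
    (V W M : Matrix n n ℂ) (h : V * W = 1) :
    charmatrix (V * M * W) = V.map C * charmatrix M * W.map C := by
  have hm : ∀ A B : Matrix n n ℂ, (A * B).map (C : ℂ →+* ℂ[X]) = A.map C * B.map C :=
    fun A B => Matrix.map_mul
  have key : ∀ N : Matrix n n ℂ, charmatrix N = (X : ℂ[X]) • (1 : Matrix n n ℂ[X]) - N.map C := by
    intro N
    rw [charmatrix, RingHom.mapMatrix_apply, Matrix.scalar_apply, Matrix.smul_one_eq_diagonal]
  rw [key, key, Matrix.mul_sub, Matrix.sub_mul, mul_smul_comm, smul_mul_assoc, Matrix.mul_one,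
    ← hm, ← hm, h]
  simp

lemma charpoly_unitary_conj {n : Type*} [Fintype n] [DecidableEq n]
    (V M : Matrix n n ℂ) (hV : V ∈ Matrix.unitaryGroup n ℂ) :
    (V * M * Vᴴ).charpoly = M.charpoly := by
  have h1 : V * Vᴴ = 1 := by
    have := (Matrix.mem_unitaryGroup_iff).mp hV
    rwa [Matrix.star_eq_conjTranspose] at this
  rw [Matrix.charpoly, charmatrix_unitary_conj V Vᴴ M h1, Matrix.det_mul, Matrix.det_mul,
    mul_comm, ← mul_assoc, ← Matrix.det_mul, ← Matrix.map_mul]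
  have h2 : Vᴴ * V = 1 := by
    have := (Matrix.mem_unitaryGroup_iff').mp hV
    rwa [Matrix.star_eq_conjTranspose] at this
  rw [h2]
  simp [Matrix.charpoly]

lemma charpoly_diagonal' {n : Type*} [Fintype n] [DecidableEq n] (d : n → ℂ) :
    (Matrix.diagonal d).charpoly = ∏ i, (X - C (d i)) := by
  have : charmatrix (Matrix.diagonal d) = Matrix.diagonal (fun i => X - C (d i)) := by
    ext i j
    rcases eq_or_ne i j with rfl | hij
    · simp
    · simp [hij, Matrix.diagonal_apply_ne _ hij]
  rw [Matrix.charpoly, this, Matrix.det_diagonal]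

/-- Master lemma: entropy from an explicit unitary diagonalization. -/
lemma vnEntropy_decomp {n : Type*} [Fintype n] [DecidableEq n] {A V : Matrix n n ℂ}
    (hV : V ∈ Matrix.unitaryGroup n ℂ) (d : n → ℝ)
    (hA : A = V * Matrix.diagonal (fun i => (d i : ℂ)) * Vᴴ) :
    vnEntropy A = ∑ i, entEta (d i) := by
  have hherm : A.IsHermitian := by
    rw [hA]
    apply Matrix.isHermitian_mul_mul_conjTranspose
    rw [Matrix.isHermitian_diagonal_iff]
    intro i
    exact Complex.conj_ofReal _
  -- charpoly equality
  have hsp := hherm.spectral_theorem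
  have hU : (hherm.eigenvectorUnitary : Matrix n n ℂ) ∈ Matrix.unitaryGroup n ℂ :=
    hherm.eigenvectorUnitary.2
  have hc1 : A.charpoly = ∏ i, (X - C ((d i : ℂ))) := by
    rw [hA, charpoly_unitary_conj _ _ hV, charpoly_diagonal']
  have hc2 : A.charpoly = ∏ i, (X - C ((hherm.eigenvalues i : ℂ))) := by
    conv_lhs => rw [hsp]
    rw [← Matrix.star_eq_conjTranspose] at *
    rw [Unitary.conjStarAlgAut_apply]
    rw [show (star (hherm.eigenvectorUnitary : Matrix n n ℂ)) =
      (hherm.eigenvectorUnitary : Matrix n n ℂ)ᴴ from rfl]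
    rw [charpoly_unitary_conj _ _ hU]
    rw [show (Matrix.diagonal (RCLike.ofReal ∘ hherm.eigenvalues) : Matrix n n ℂ) =
      Matrix.diagonal (fun i => ((hherm.eigenvalues i : ℝ) : ℂ)) from rfl]
    rw [charpoly_diagonal']
  -- multiset of roots
  have hmul : (Finset.univ.val.map (fun i => ((d i : ℝ) : ℂ))) =
      (Finset.univ.val.map (fun i => ((hherm.eigenvalues i : ℝ) : ℂ))) := by
    have h1 := congrArg Polynomial.roots (hc1.symm.trans hc2)
    rw [Finset.prod_eq_multiset_prod, Finset.prod_eq_multiset_prod] at h1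
    rw [show (Finset.univ.val.map fun i => X - C ((d i : ℝ) : ℂ)) =
      ((Finset.univ.val.map fun i => ((d i : ℝ) : ℂ)).map fun a => X - C a) by
        rw [Multiset.map_map]; rfl] at h1
    rw [show (Finset.univ.val.map fun i => X - C ((hherm.eigenvalues i : ℝ) : ℂ)) =
      ((Finset.univ.val.map fun i => ((hherm.eigenvalues i : ℝ) : ℂ)).map fun a => X - C a) by
        rw [Multiset.map_map]; rfl] at h1
    rwa [Polynomial.roots_multiset_prod_X_sub_C, Polynomial.roots_multiset_prod_X_sub_C] at h1
  have hreal : (Finset.univ.val.map d) = (Finset.univ.val.map hherm.eigenvalues) := by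
    apply Multiset.map_injective Complex.ofReal_injective
    rw [Multiset.map_map, Multiset.map_map]
    exact hmul
  rw [vnEntropy, dif_pos hherm]
  rw [show (∑ i, entEta (hherm.eigenvalues i)) =
    ((Finset.univ.val.map hherm.eigenvalues).map entEta).sum by
      rw [Multiset.map_map]; rfl]
  rw [show (∑ i, entEta (d i)) = ((Finset.univ.val.map d).map entEta).sum by
      rw [Multiset.map_map]; rfl]
  rw [hreal]

lemma trace_decomp {n : Type*} [Fintype n] [DecidableEq n] {A V : Matrix n n ℂ}
    (hV : V ∈ Matrix.unitaryGroup n ℂ) (d : n → ℝ)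
    (hA : A = V * Matrix.diagonal (fun i => (d i : ℂ)) * Vᴴ) :
    A.trace = ((∑ i, d i : ℝ) : ℂ) := by
  have h2 : Vᴴ * V = 1 := by
    have := (Matrix.mem_unitaryGroup_iff').mp hV
    rwa [Matrix.star_eq_conjTranspose] at this
  rw [hA, Matrix.trace_mul_cycle, h2, one_mul, Matrix.trace_diagonal]
  push_cast
  rfl

/-- block diagonal matrix with block index first -/
def bd {c : ℕ} {β : Type*} (B : Fin c → Matrix β β ℂ) : Matrix (Fin c × β) (Fin c × β) ℂ :=
  Matrix.of fun x y => if x.1 = y.1 then B x.1 x.2 y.2 else 0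

lemma bd_apply {c : ℕ} {β : Type*} (B : Fin c → Matrix β β ℂ) (x y : Fin c × β) :
    bd B x y = if x.1 = y.1 then B x.1 x.2 y.2 else 0 := rfl

lemma bd_mul {c : ℕ} {β : Type*} [Fintype β] (B C' : Fin c → Matrix β β ℂ) :
    bd B * bd C' = bd (fun i => B i * C' i) := by
  ext ⟨i, x⟩ ⟨j, y⟩
  simp only [Matrix.mul_apply, bd_apply, Fintype.sum_prod_type]
  rw [Finset.sum_comm]
  simp only [ite_mul, mul_ite, zero_mul, mul_zero]
  rcases eq_or_ne i j with rfl | hij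
  · simp [Finset.sum_ite_eq, Matrix.mul_apply]
  · simp [hij]

lemma bd_conjTranspose {c : ℕ} {β : Type*} (B : Fin c → Matrix β β ℂ) :
    (bd B)ᴴ = bd (fun i => (B i)ᴴ) := by
  ext ⟨i, x⟩ ⟨j, y⟩
  simp only [Matrix.conjTranspose_apply, bd_apply]
  rcases eq_or_ne i j with rfl | hij
  · simp
  · rw [if_neg hij, if_neg (Ne.symm hij), star_zero]

lemma bd_one {c : ℕ} {β : Type*} [Fintype β] [DecidableEq β] :
    bd (fun _ : Fin c => (1 : Matrix β β ℂ)) = 1 := by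
  ext ⟨i, x⟩ ⟨j, y⟩
  simp only [bd_apply, Matrix.one_apply, Prod.mk.injEq, Prod.ext_iff]
  rcases eq_or_ne i j with rfl | hij
  · simp
  · simp [hij]

lemma bd_diagonal {c : ℕ} {β : Type*} [DecidableEq β] (d : Fin c → β → ℂ) :
    bd (fun i => Matrix.diagonal (d i)) =
      Matrix.diagonal (fun x : Fin c × β => d x.1 x.2) := by
  ext ⟨i, x⟩ ⟨j, y⟩
  simp only [bd_apply, Matrix.diagonal_apply, Prod.mk.injEq]
  rcases eq_or_ne i j with rfl | hij
  · simp
  · simp [hij]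

lemma bd_mem_unitaryGroup {c : ℕ} {β : Type*} [Fintype β] [DecidableEq β]
    (B : Fin c → Matrix β β ℂ) (hB : ∀ i, B i ∈ Matrix.unitaryGroup β ℂ) :
    bd B ∈ Matrix.unitaryGroup (Fin c × β) ℂ := by
  rw [Matrix.mem_unitaryGroup_iff, Matrix.star_eq_conjTranspose, bd_conjTranspose, bd_mul]
  rw [show (fun i => B i * (B i)ᴴ) = fun _ => (1 : Matrix β β ℂ) from ?_, bd_one]
  funext i
  have := (Matrix.mem_unitaryGroup_iff).mp (hB i)
  rwa [Matrix.star_eq_conjTranspose] at this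

/-- entropy of a block-diagonal matrix given blockwise diagonalizations -/
lemma vnEntropy_bd {c : ℕ} {β : Type*} [Fintype β] [DecidableEq β]
    {Ω : Matrix (Fin c × β) (Fin c × β) ℂ}
    (B V : Fin c → Matrix β β ℂ) (hV : ∀ i, V i ∈ Matrix.unitaryGroup β ℂ)
    (d : Fin c → β → ℝ)
    (hB : ∀ i, B i = V i * Matrix.diagonal (fun x => ((d i x : ℝ) : ℂ)) * (V i)ᴴ)
    (hΩ : Ω = bd B) :
    vnEntropy Ω = ∑ i, ∑ x, entEta (d i x) := by
  rw [show (∑ i, ∑ x, entEta (d i x)) = ∑ p : Fin c × β, entEta (d p.1 p.2) from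
    (Fintype.sum_prod_type (fun p : Fin c × β => entEta (d p.1 p.2))).symm]
  apply vnEntropy_decomp (bd_mem_unitaryGroup V hV) (fun p : Fin c × β => d p.1 p.2)
  rw [hΩ, ← bd_diagonal (fun i x => ((d i x : ℝ) : ℂ)), bd_conjTranspose, bd_mul, bd_mul]
  exact congrArg bd (funext fun i => hB i)

-- kronecker conjTranspose
lemma kronecker_conjTranspose' {m n : Type*} (A : Matrix m m ℂ) (B : Matrix n n ℂ) :
    (A ⊗ₖ B)ᴴ = Aᴴ ⊗ₖ Bᴴ := by
  ext ⟨i, j⟩ ⟨k, l⟩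
  simp [Matrix.conjTranspose_apply, Matrix.kroneckerMap_apply, star_mul', mul_comm]

lemma diagonal_exp_unitary {n : Type*} [Fintype n] [DecidableEq n] (f : n → ℂ)
    (hf : ∀ i, (f i).re = 0) :
    (Matrix.diagonal fun i => Complex.exp (f i)) ∈ Matrix.unitaryGroup n ℂ := by
  rw [Matrix.mem_unitaryGroup_iff', Matrix.star_eq_conjTranspose, Matrix.diagonal_conjTranspose]
  rw [Matrix.diagonal_mul_diagonal]
  have : ∀ i, star (Complex.exp (f i)) * Complex.exp (f i) = 1 := by
    intro i
    rw [Complex.star_def, ← Complex.exp_conj, ← Complex.exp_add]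
    rw [Complex.exp_eq_one_iff]
    refine ⟨0, ?_⟩
    apply Complex.ext <;> simp [hf i]
  simp only [Pi.star_apply, this]
  exact Matrix.diagonal_one

lemma kronecker_mem_unitaryGroup {m n : Type*} [Fintype m] [DecidableEq m] [Fintype n]
    [DecidableEq n] {A : Matrix m m ℂ} {B : Matrix n n ℂ}
    (hA : A ∈ Matrix.unitaryGroup m ℂ) (hB : B ∈ Matrix.unitaryGroup n ℂ) :
    A ⊗ₖ B ∈ Matrix.unitaryGroup (m × n) ℂ := by
  rw [Matrix.mem_unitaryGroup_iff, Matrix.star_eq_conjTranspose, kronecker_conjTranspose',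
    ← Matrix.mul_kronecker_mul]
  have h1 : A * Aᴴ = 1 := by
    have := (Matrix.mem_unitaryGroup_iff).mp hA; rwa [Matrix.star_eq_conjTranspose] at this
  have h2 : B * Bᴴ = 1 := by
    have := (Matrix.mem_unitaryGroup_iff).mp hB; rwa [Matrix.star_eq_conjTranspose] at this
  rw [h1, h2, Matrix.one_kronecker_one]

lemma twirlU_mem_unitaryGroup {s r : ℕ} (ES : Fin s → ℤ) (ER : Fin r → ℤ) (θ : ℝ) :
    twirlU ES ER θ ∈ Matrix.unitaryGroup (Fin s × Fin r) ℂ := by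
  apply kronecker_mem_unitaryGroup <;>
    exact diagonal_exp_unitary _ (fun i => by simp [Complex.mul_re, Complex.mul_im])

lemma sum_sum_entEta_mul {α β : Type*} [Fintype α] [Fintype β] (f : α → ℝ) (g : β → ℝ) :
    ∑ i, ∑ j, entEta (f i * g j) =
      (∑ i, f i) * (∑ j, entEta (g j)) + (∑ j, g j) * (∑ i, entEta (f i)) := by
  simp only [entEta_mul, Finset.sum_add_distrib, ← Finset.mul_sum, ← Finset.sum_mul]

lemma trace_conj_unitary {n : Type*} [Fintype n] [DecidableEq n] {U : Matrix n n ℂ}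
    (A : Matrix n n ℂ) (hU : U ∈ Matrix.unitaryGroup n ℂ) :
    (U * A * Uᴴ).trace = A.trace := by
  have h2 : Uᴴ * U = 1 := by
    have := (Matrix.mem_unitaryGroup_iff').mp hU
    rwa [Matrix.star_eq_conjTranspose] at this
  rw [Matrix.trace_mul_cycle, h2, one_mul]

lemma block_decomp {n : Type*} [Fintype n] [DecidableEq n] (t : ℝ) (U W A : Matrix n n ℂ)
    (d : n → ℝ) (hA : A = W * Matrix.diagonal (fun i => ((d i : ℝ) : ℂ)) * Wᴴ) :
    (t : ℂ) • (U * A * Uᴴ) =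
      (U * W) * Matrix.diagonal (fun i => ((t * d i : ℝ) : ℂ)) * (U * W)ᴴ := by
  have hd : Matrix.diagonal (fun i => ((t * d i : ℝ) : ℂ)) =
      (t : ℂ) • Matrix.diagonal (fun i => ((d i : ℝ) : ℂ)) := by
    ext i j
    rcases eq_or_ne i j with rfl | hij
    · simp
    · simp [Matrix.diagonal_apply_ne _ hij]
  rw [hA, hd, Matrix.conjTranspose_mul, mul_smul_comm, smul_mul_assoc]
  congr 1
  simp only [mul_assoc]

/-- spectral decomposition of a Hermitian matrix, in the coerced form -/
lemma herm_decomp {n : Type*} [Fintype n] [DecidableEq n] {A : Matrix n n ℂ}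
    (hA : A.IsHermitian) :
    A = (hA.eigenvectorUnitary : Matrix n n ℂ) *
        Matrix.diagonal (fun i => ((hA.eigenvalues i : ℝ) : ℂ)) *
        (hA.eigenvectorUnitary : Matrix n n ℂ)ᴴ := by
  conv_lhs => rw [hA.spectral_theorem]
  rfl

end AuxEntropy

/-- the interaction information of the cq-state equals the mutual
asymmetry of the product state. -/
theorem interaction_information_eq_mutual_asymmetry {c s r : ℕ}
    (p : Fin c → ℝ) (hp0 : ∀ i, 0 ≤ p i) (hp1 : ∑ i, p i = 1)
    (θ : Fin c → ℝ)
    (ρS : Matrix (Fin s) (Fin s) ℂ) (ρR : Matrix (Fin r) (Fin r) ℂ)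
    (ES : Fin s → ℤ) (ER : Fin r → ℤ)
    (hS : IsDensityMatrix ρS) (hR : IsDensityMatrix ρR)
    (htwirl : ∑ i, (p i : ℂ) •
        (twirlU ES ER (θ i) * (ρS ⊗ₖ ρR) * (twirlU ES ER (θ i))ᴴ) =
      pinch (globalE ES ER) (ρS ⊗ₖ ρR))
    (Ω : Matrix (Fin c × (Fin s × Fin r)) (Fin c × (Fin s × Fin r)) ℂ)
    (hΩ : ∀ x y : Fin c × (Fin s × Fin r),
      Ω x y = if x.1 = y.1 then
          (p x.1 : ℂ) *
            (twirlU ES ER (θ x.1) * (ρS ⊗ₖ ρR) * (twirlU ES ER (θ x.1))ᴴ) x.2 y.2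
        else 0) :
    (vnEntropy (ptraceSnd (ptraceFst Ω)) + vnEntropy (ptraceFst (ptraceFst Ω)) -
        vnEntropy (ptraceFst Ω)) -
      (vnEntropy (margSC Ω) + vnEntropy (margRC Ω) - vnEntropy Ω -
        vnEntropy (ptraceSnd Ω)) =
    asym ES ρS + asym ER ρR - asym (globalE ES ER) (ρS ⊗ₖ ρR) := by
  obtain ⟨hSh, hSpsd, hStr⟩ := hS
  obtain ⟨hRh, hRpsd, hRtr⟩ := hR
  set WS : Matrix (Fin s) (Fin s) ℂ := (hSh.eigenvectorUnitary : Matrix (Fin s) (Fin s) ℂ)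
    with hWSdef
  set WR : Matrix (Fin r) (Fin r) ℂ := (hRh.eigenvectorUnitary : Matrix (Fin r) (Fin r) ℂ)
    with hWRdef
  have hWSu : WS ∈ Matrix.unitaryGroup (Fin s) ℂ := hSh.eigenvectorUnitary.2
  have hWRu : WR ∈ Matrix.unitaryGroup (Fin r) ℂ := hRh.eigenvectorUnitary.2
  set lS : Fin s → ℝ := hSh.eigenvalues with hlSdef
  set lR : Fin r → ℝ := hRh.eigenvalues with hlRdef
  have hdecS : ρS = WS * Matrix.diagonal (fun m => ((lS m : ℝ) : ℂ)) * WSᴴ := herm_decomp hSh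
  have hdecR : ρR = WR * Matrix.diagonal (fun n => ((lR n : ℝ) : ℂ)) * WRᴴ := herm_decomp hRh
  have hdecSR : ρS ⊗ₖ ρR = (WS ⊗ₖ WR) *
      Matrix.diagonal (fun x : Fin s × Fin r => ((lS x.1 * lR x.2 : ℝ) : ℂ)) *
      (WS ⊗ₖ WR)ᴴ := by
    conv_lhs => rw [hdecS, hdecR]
    rw [Matrix.mul_kronecker_mul, Matrix.mul_kronecker_mul, kronecker_conjTranspose',
      Matrix.diagonal_kronecker_diagonal]
    congr 2
    funext x
    push_cast
    ring
  have hSRu : WS ⊗ₖ WR ∈ Matrix.unitaryGroup (Fin s × Fin r) ℂ :=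
    kronecker_mem_unitaryGroup hWSu hWRu
  have hsumS : ∑ m, lS m = 1 := by
    have h1 := trace_decomp hWSu _ hdecS
    rw [hStr] at h1
    exact_mod_cast h1.symm
  have hsumR : ∑ n, lR n = 1 := by
    have h1 := trace_decomp hWRu _ hdecR
    rw [hRtr] at h1
    exact_mod_cast h1.symm
  have hUi : ∀ i, twirlU ES ER (θ i) ∈ Matrix.unitaryGroup (Fin s × Fin r) ℂ :=
    fun i => twirlU_mem_unitaryGroup ES ER (θ i)
  set USd : Fin c → Matrix (Fin s) (Fin s) ℂ :=
    fun i => Matrix.diagonal fun m => Complex.exp (-Complex.I * (θ i) * (ES m : ℂ)) with hUSdef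
  set URd : Fin c → Matrix (Fin r) (Fin r) ℂ :=
    fun i => Matrix.diagonal fun n => Complex.exp (-Complex.I * (θ i) * (ER n : ℂ)) with hURdef
  have hUSu : ∀ i, USd i ∈ Matrix.unitaryGroup (Fin s) ℂ :=
    fun i => diagonal_exp_unitary _ (fun m => by simp [Complex.mul_re, Complex.mul_im])
  have hURu : ∀ i, URd i ∈ Matrix.unitaryGroup (Fin r) ℂ :=
    fun i => diagonal_exp_unitary _ (fun n => by simp [Complex.mul_re, Complex.mul_im])
  have hMi : ∀ i, twirlU ES ER (θ i) * (ρS ⊗ₖ ρR) * (twirlU ES ER (θ i))ᴴ =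
      (USd i * ρS * (USd i)ᴴ) ⊗ₖ (URd i * ρR * (URd i)ᴴ) := by
    intro i
    rw [show twirlU ES ER (θ i) = USd i ⊗ₖ URd i from rfl, kronecker_conjTranspose',
      Matrix.mul_kronecker_mul, Matrix.mul_kronecker_mul]
  have htrR1 : ∀ i, (URd i * ρR * (URd i)ᴴ).trace = 1 := fun i => by
    rw [trace_conj_unitary _ (hURu i), hRtr]
  have htrS1 : ∀ i, (USd i * ρS * (USd i)ᴴ).trace = 1 := fun i => by
    rw [trace_conj_unitary _ (hUSu i), hStr]
  -- (1) entropy of Ω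
  have hΩbd : Ω = bd (fun i => (p i : ℂ) •
      (twirlU ES ER (θ i) * (ρS ⊗ₖ ρR) * (twirlU ES ER (θ i))ᴴ)) := by
    ext ⟨i, x⟩ ⟨j, y⟩
    rw [hΩ]
    simp [bd_apply]
  have hSΩ : vnEntropy Ω = ∑ i, ∑ x : Fin s × Fin r, entEta (p i * (lS x.1 * lR x.2)) :=
    vnEntropy_bd _ (fun i => twirlU ES ER (θ i) * (WS ⊗ₖ WR))
      (fun i => mul_mem (hUi i) hSRu)
      (fun i x => p i * (lS x.1 * lR x.2))
      (fun i => block_decomp (p i) _ _ _ _ hdecSR) hΩbd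
  -- (2) entropy of margSC
  have hSCbd : margSC Ω = bd (fun i => (p i : ℂ) • (USd i * ρS * (USd i)ᴴ)) := by
    ext ⟨i, m⟩ ⟨j, m'⟩
    simp only [margSC, Matrix.of_apply, hΩ, bd_apply, Matrix.smul_apply, smul_eq_mul]
    rcases eq_or_ne i j with rfl | hij
    · simp only [if_pos rfl, hMi, Matrix.kroneckerMap_apply, if_true]
      rw [← Finset.mul_sum, ← Finset.mul_sum,
        show (∑ n, (URd i * ρR * (URd i)ᴴ) n n) = (URd i * ρR * (URd i)ᴴ).trace from rfl,
        htrR1 i, mul_one]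
    · simp [hij]
  have hSSC : vnEntropy (margSC Ω) = ∑ i, ∑ m, entEta (p i * lS m) :=
    vnEntropy_bd _ (fun i => USd i * WS) (fun i => mul_mem (hUSu i) hWSu)
      (fun i m => p i * lS m) (fun i => block_decomp (p i) _ _ _ _ hdecS) hSCbd
  -- (3) entropy of margRC
  have hRCbd : margRC Ω = bd (fun i => (p i : ℂ) • (URd i * ρR * (URd i)ᴴ)) := by
    ext ⟨i, n⟩ ⟨j, n'⟩
    simp only [margRC, Matrix.of_apply, hΩ, bd_apply, Matrix.smul_apply, smul_eq_mul]
    rcases eq_or_ne i j with rfl | hij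
    · simp only [if_pos rfl, hMi, Matrix.kroneckerMap_apply, if_true]
      rw [← Finset.mul_sum, ← Finset.sum_mul,
        show (∑ m, (USd i * ρS * (USd i)ᴴ) m m) = (USd i * ρS * (USd i)ᴴ).trace from rfl,
        htrS1 i, one_mul]
    · simp [hij]
  have hSRC : vnEntropy (margRC Ω) = ∑ i, ∑ n, entEta (p i * lR n) :=
    vnEntropy_bd _ (fun i => URd i * WR) (fun i => mul_mem (hURu i) hWRu)
      (fun i n => p i * lR n) (fun i => block_decomp (p i) _ _ _ _ hdecR) hRCbd
  -- (4) entropy of the classical marginal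
  have hCdiag : ptraceSnd Ω = Matrix.diagonal (fun i => ((p i : ℝ) : ℂ)) := by
    ext i j
    simp only [ptraceSnd, Matrix.of_apply, hΩ, Matrix.diagonal_apply]
    rcases eq_or_ne i j with rfl | hij
    · simp only [if_pos rfl, if_true]
      rw [← Finset.mul_sum,
        show (∑ x : Fin s × Fin r,
            (twirlU ES ER (θ i) * (ρS ⊗ₖ ρR) * (twirlU ES ER (θ i))ᴴ) x x) =
          (twirlU ES ER (θ i) * (ρS ⊗ₖ ρR) * (twirlU ES ER (θ i))ᴴ).trace from rfl,
        trace_conj_unitary _ (hUi i), Matrix.trace_kronecker, hStr, hRtr, mul_one, mul_one]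
    · simp [hij]
  have hSC2 : vnEntropy (ptraceSnd Ω) = ∑ i, entEta (p i) := by
    apply vnEntropy_decomp (one_mem _) (fun i => p i)
    rw [hCdiag, Matrix.one_mul, Matrix.conjTranspose_one, Matrix.mul_one]
  -- (5) the SR marginal is the pinched state
  have hM1 : ptraceFst Ω = pinch (globalE ES ER) (ρS ⊗ₖ ρR) := by
    ext x y
    have h := congrFun (congrFun htwirl x) y
    rw [Matrix.sum_apply] at h
    simp only [Matrix.smul_apply, smul_eq_mul] at h
    simp only [ptraceFst, Matrix.of_apply, hΩ]
    simpa using h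
  have hM2 : ptraceSnd (ptraceFst Ω) = pinch ES ρS := by
    rw [hM1]
    ext m m'
    simp only [ptraceSnd, pinch, Matrix.of_apply, globalE, Matrix.kroneckerMap_apply,
      add_left_inj]
    by_cases h : ES m = ES m'
    · simp only [if_pos h, ← Finset.mul_sum]
      rw [show (∑ n, ρR n n) = ρR.trace from rfl, hRtr, mul_one]
    · simp [h]
  have hM3 : ptraceFst (ptraceFst Ω) = pinch ER ρR := by
    rw [hM1]
    ext n n'
    simp only [ptraceFst, pinch, Matrix.of_apply, globalE, Matrix.kroneckerMap_apply,
      add_right_inj]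
    by_cases h : ER n = ER n'
    · simp only [if_pos h, ← Finset.sum_mul]
      rw [show (∑ m, ρS m m) = ρS.trace from rfl, hStr, one_mul]
    · simp [h]
  -- (6) entropies of density matrices
  have hSq : vnEntropy (ρS ⊗ₖ ρR) = ∑ x : Fin s × Fin r, entEta (lS x.1 * lR x.2) :=
    vnEntropy_decomp hSRu _ hdecSR
  have hSS : vnEntropy ρS = ∑ m, entEta (lS m) := vnEntropy_decomp hWSu _ hdecS
  have hSR' : vnEntropy ρR = ∑ n, entEta (lR n) := vnEntropy_decomp hWRu _ hdecR
  -- (7) sum computations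
  have e1 : ∑ i, ∑ x : Fin s × Fin r, entEta (p i * (lS x.1 * lR x.2)) =
      (∑ x : Fin s × Fin r, entEta (lS x.1 * lR x.2)) + ∑ i, entEta (p i) := by
    rw [sum_sum_entEta_mul, hp1, one_mul,
      show (∑ x : Fin s × Fin r, lS x.1 * lR x.2) = (∑ m, lS m) * (∑ n, lR n) by
        rw [Finset.sum_mul_sum]
        exact Fintype.sum_prod_type _,
      hsumS, hsumR, one_mul, one_mul]
  have e2 : ∑ i, ∑ m, entEta (p i * lS m) = (∑ m, entEta (lS m)) + ∑ i, entEta (p i) := by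
    rw [sum_sum_entEta_mul, hp1, hsumS, one_mul, one_mul]
  have e3 : ∑ i, ∑ n, entEta (p i * lR n) = (∑ n, entEta (lR n)) + ∑ i, entEta (p i) := by
    rw [sum_sum_entEta_mul, hp1, hsumR, one_mul, one_mul]
  rw [hM2, hM3, hM1, hSΩ, hSSC, hSRC, hSC2, e1, e2, e3]
  simp only [asym]
  rw [hSq, hSS, hSR']
  ring
end

section
/- Let I be a finite index type, ρ a density matrix on I, and f : I → α, g : I → β functions such that the partition induced by g refines the partition induced by f (i.e. for all i, j, g i = g j implies f i = f j). Then pinching by the finer partition does not decrease the von Neumann entropy: S(P_g ρ) ≥ S(P_f ρ). In particular (taking f constant) S(P_g ρ) ≥ S(ρ), and on a bipartite system S(Δρ) ≥ S(Πρ). -/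
open Matrix Kronecker BigOperators ComplexOrder

/-! ### Auxiliary lemmas -/

/-- Splitting a `g`-diagonal double sum into fibers of `g`. -/
lemma sum_ite_fiber {I β : Type*} [Fintype I] [DecidableEq β] (g : I → β) (F : I → I → ℂ) :
    ∑ a, ∑ b, (if g a = g b then F a b else 0)
      = ∑ c ∈ Finset.univ.image g, ∑ a ∈ Finset.univ.filter (fun a => g a = c),
          ∑ b ∈ Finset.univ.filter (fun b => g b = c), F a b := by
  rw [← Finset.sum_fiberwise_of_maps_to (g := g)
      (fun a (_ : a ∈ Finset.univ) => Finset.mem_image_of_mem g (Finset.mem_univ a))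
      (fun a => ∑ b, (if g a = g b then F a b else 0))]
  refine Finset.sum_congr rfl fun c _ => Finset.sum_congr rfl fun a ha => ?_
  have hga : g a = c := (Finset.mem_filter.mp ha).2
  rw [Finset.sum_filter]
  refine Finset.sum_congr rfl fun b _ => ?_
  rw [hga]
  by_cases h : g b = c
  · rw [if_pos h.symm, if_pos h]
  · rw [if_neg (fun hh => h hh.symm), if_neg h]

lemma sum_ite_conj_fiber {I β : Type*} [Fintype I] [DecidableEq β] (g : I → β) (x : I → ℂ) :
    ∑ a, ∑ b, (if g a = g b then x a * star (x b) else 0)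
      = ∑ c ∈ Finset.univ.image g,
          ((‖∑ a ∈ Finset.univ.filter (fun a => g a = c), x a‖ : ℂ))^2 := by
  rw [sum_ite_fiber]
  refine Finset.sum_congr rfl fun c _ => ?_
  calc ∑ a ∈ Finset.univ.filter (fun a => g a = c),
        ∑ b ∈ Finset.univ.filter (fun b => g b = c), x a * star (x b)
      = (∑ a ∈ Finset.univ.filter (fun a => g a = c), x a)
          * star (∑ b ∈ Finset.univ.filter (fun b => g b = c), x b) := by
        rw [star_sum, Finset.sum_mul_sum]
    _ = _ := by
        rw [RCLike.star_def, Complex.mul_conj, Complex.normSq_eq_norm_sq]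
        push_cast
        rfl

lemma pinch_isHermitian {I α : Type*} [DecidableEq α] {ρ : Matrix I I ℂ}
    (hρ : ρ.IsHermitian) (f : I → α) : (pinch f ρ).IsHermitian := by
  ext i j
  have h := congrFun (congrFun hρ i) j
  simp only [conjTranspose_apply] at h ⊢
  simp only [pinch, Matrix.of_apply]
  by_cases hf : f i = f j
  · rw [if_pos hf.symm, if_pos hf, h]
  · rw [if_neg (fun hh => hf hh.symm), if_neg hf, star_zero]

lemma pinch_posSemidef {I α : Type*} [Fintype I] [DecidableEq I] [DecidableEq α]
    {ρ : Matrix I I ℂ} (hρ : ρ.PosSemidef) (f : I → α) : (pinch f ρ).PosSemidef := by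
  refine Matrix.PosSemidef.of_dotProduct_mulVec_nonneg (pinch_isHermitian hρ.1 f) fun x => ?_
  have h1 : dotProduct (star x) (pinch f ρ *ᵥ x)
      = ∑ a, ∑ b, (if f a = f b then star (x a) * (ρ a b * x b) else 0) := by
    simp only [dotProduct, mulVec, Pi.star_apply, pinch, Matrix.of_apply]
    refine Finset.sum_congr rfl fun a _ => ?_
    rw [Finset.mul_sum]
    refine Finset.sum_congr rfl fun b _ => ?_
    by_cases h : f a = f b <;> simp [h, dotProduct]
  rw [h1, sum_ite_fiber]
  refine Finset.sum_nonneg fun c _ => ?_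
  have h2 := hρ.dotProduct_mulVec_nonneg (fun a => if f a = c then x a else 0)
  refine le_trans h2 (le_of_eq ?_)
  calc dotProduct (star fun a => if f a = c then x a else 0)
        (ρ *ᵥ fun a => if f a = c then x a else 0)
      = ∑ a, ∑ b, (if f a = c then (if f b = c then star (x a) * (ρ a b * x b) else 0) else 0) := by
        simp only [dotProduct, mulVec, Pi.star_apply]
        refine Finset.sum_congr rfl fun a _ => ?_
        rw [Finset.mul_sum]
        refine Finset.sum_congr rfl fun b _ => ?_
        by_cases h : f a = c <;> by_cases h' : f b = c <;> simp [h, h', dotProduct]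
    _ = _ := by
        simp only [Finset.sum_filter]
        refine Finset.sum_congr rfl fun a _ => ?_
        by_cases h : f a = c <;> simp [h]

lemma pinch_pinch {I α β : Type*} [DecidableEq α] [DecidableEq β] (f : I → α) (g : I → β)
    (h : ∀ i j, g i = g j → f i = f j) (ρ : Matrix I I ℂ) :
    pinch g (pinch f ρ) = pinch g ρ := by
  ext i j
  simp only [pinch, Matrix.of_apply]
  by_cases hg : g i = g j
  · rw [if_pos hg, if_pos hg, if_pos (h i j hg)]
  · rw [if_neg hg, if_neg hg]

/-- Core lemma: pinching does not decrease the von Neumann entropy. -/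
lemma vnEntropy_le_vnEntropy_pinch {I β : Type*} [Fintype I] [DecidableEq I] [DecidableEq β]
    {ρ : Matrix I I ℂ} (hρ : ρ.PosSemidef) (g : I → β) :
    vnEntropy ρ ≤ vnEntropy (pinch g ρ) := by
  classical
  have hA : ρ.IsHermitian := hρ.1
  have hB : (pinch g ρ).IsHermitian := pinch_isHermitian hA g
  set U : Matrix I I ℂ := (hA.eigenvectorUnitary : Matrix I I ℂ) with hUdef
  set V : Matrix I I ℂ := (hB.eigenvectorUnitary : Matrix I I ℂ) with hVdef
  set lam : I → ℝ := hA.eigenvalues with hlamdef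
  set mu : I → ℝ := hB.eigenvalues with hmudef
  have hUU : U * star U = 1 := (Matrix.mem_unitaryGroup_iff).mp hA.eigenvectorUnitary.2
  have hVV : V * star V = 1 := (Matrix.mem_unitaryGroup_iff).mp hB.eigenvectorUnitary.2
  have hVV' : star V * V = 1 := (Matrix.mem_unitaryGroup_iff').mp hB.eigenvectorUnitary.2
  have hUU' : star U * U = 1 := (Matrix.mem_unitaryGroup_iff').mp hA.eigenvectorUnitary.2
  -- entrywise spectral decomposition of ρ
  have hent : ∀ a b, ρ a b = ∑ j, (lam j : ℂ) * (U a j * star (U b j)) := by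
    intro a b
    conv_lhs => rw [hA.spectral_theorem, Unitary.conjStarAlgAut_apply, Matrix.mul_assoc]
    simp only [Matrix.mul_apply, Matrix.diagonal_apply, Matrix.star_apply, Function.comp_apply,
      ite_mul, zero_mul, Finset.sum_ite_eq, Finset.mem_univ, if_pos,
      show ∀ x : ℝ, (RCLike.ofReal x : ℂ) = (x : ℂ) from fun _ => rfl, ← hUdef, ← hlamdef]
    exact Finset.sum_congr rfl fun j _ => by ring
  -- eigenvalues of the pinched matrix as quadratic forms
  have hmu : ∀ i, mu i = Complex.re (∑ a, star (V a i) * ∑ b, (pinch g ρ) a b * V b i) := by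
    intro i
    rw [hmudef, hB.eigenvalues_eq i]
    simp only [dotProduct, mulVec, Pi.star_apply, RCLike.re_to_complex,
      ← Matrix.IsHermitian.eigenvectorUnitary_apply, ← hVdef]
  -- the doubly stochastic weights
  set w : I → I → ℝ := fun i j => ∑ c ∈ Finset.univ.image g,
    ‖∑ a ∈ Finset.univ.filter (fun a => g a = c), star (V a i) * U a j‖^2 with hwdef
  have hw_nonneg : ∀ i j, 0 ≤ w i j := fun i j => Finset.sum_nonneg fun c _ => sq_nonneg _
  have hwC : ∀ i j, (w i j : ℂ) = ∑ a, ∑ b,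
      (if g a = g b then (star (V a i) * U a j) * star (star (V b i) * U b j) else 0) := by
    intro i j
    simp only [hwdef]
    push_cast
    exact (sum_ite_conj_fiber g (fun a => star (V a i) * U a j)).symm
  -- (i) each μ_i is the w-average of the λ_j
  have hmusum : ∀ i, mu i = ∑ j, w i j * lam j := by
    intro i
    have hC : (∑ a, star (V a i) * ∑ b, (pinch g ρ) a b * V b i)
        = ∑ j, (lam j : ℂ) * (w i j : ℂ) := by
      calc ∑ a, star (V a i) * ∑ b, (pinch g ρ) a b * V b i
          = ∑ a, ∑ b, (if g a = g b then star (V a i) * (ρ a b * V b i) else 0) := by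
            refine Finset.sum_congr rfl fun a _ => ?_
            rw [Finset.mul_sum]
            refine Finset.sum_congr rfl fun b _ => ?_
            simp only [pinch, Matrix.of_apply]
            by_cases h : g a = g b <;> simp [h]
        _ = ∑ a, ∑ b, ∑ j, (if g a = g b then
              (lam j : ℂ) * ((star (V a i) * U a j) * star (star (V b i) * U b j)) else 0) := by
            refine Finset.sum_congr rfl fun a _ => Finset.sum_congr rfl fun b _ => ?_
            by_cases h : g a = g b
            · simp only [if_pos h]
              rw [hent a b, Finset.sum_mul, Finset.mul_sum]
              refine Finset.sum_congr rfl fun j _ => ?_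
              simp only [star_mul', star_star]
              ring
            · simp [h]
        _ = ∑ j, ∑ a, ∑ b, (if g a = g b then
              (lam j : ℂ) * ((star (V a i) * U a j) * star (star (V b i) * U b j)) else 0) := by
            have h1 : ∀ a : I, ∑ b, ∑ j, (if g a = g b then
                (lam j : ℂ) * ((star (V a i) * U a j) * star (star (V b i) * U b j)) else 0)
                = ∑ j, ∑ b, (if g a = g b then
                (lam j : ℂ) * ((star (V a i) * U a j) * star (star (V b i) * U b j)) else 0) :=
              fun a => Finset.sum_comm
            simp only [h1]
            exact Finset.sum_comm
        _ = ∑ j, (lam j : ℂ) * (w i j : ℂ) := by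
            refine Finset.sum_congr rfl fun j _ => ?_
            rw [hwC i j, Finset.mul_sum]
            refine Finset.sum_congr rfl fun a _ => ?_
            rw [Finset.mul_sum]
            refine Finset.sum_congr rfl fun b _ => ?_
            by_cases h : g a = g b <;> simp [h]
    rw [hmu i, hC, Complex.re_sum]
    refine Finset.sum_congr rfl fun j _ => ?_
    rw [← Complex.ofReal_mul, Complex.ofReal_re, mul_comm]
  -- (ii) rows of w sum to 1
  have hrow : ∀ i, ∑ j, w i j = 1 := by
    intro i
    have hC : ∑ j, (w i j : ℂ) = 1 := by
      calc ∑ j, (w i j : ℂ)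
          = ∑ j, ∑ a, ∑ b, (if g a = g b then
              (star (V a i) * U a j) * star (star (V b i) * U b j) else 0) :=
            Finset.sum_congr rfl fun j _ => hwC i j
        _ = ∑ a, ∑ b, ∑ j, (if g a = g b then
              (star (V a i) * U a j) * star (star (V b i) * U b j) else 0) := by
            rw [Finset.sum_comm]
            refine Finset.sum_congr rfl fun a _ => Finset.sum_comm
        _ = ∑ a, ∑ b, (if g a = g b then
              (star (V a i) * V b i) * ∑ j, U a j * star (U b j) else 0) := by
            refine Finset.sum_congr rfl fun a _ => Finset.sum_congr rfl fun b _ => ?_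
            by_cases h : g a = g b
            · simp only [if_pos h, Finset.mul_sum]
              refine Finset.sum_congr rfl fun j _ => ?_
              simp only [star_mul', star_star]
              ring
            · simp [h]
        _ = ∑ a, ∑ b, (if g a = g b then
              (star (V a i) * V b i) * (if a = b then 1 else 0) else 0) := by
            refine Finset.sum_congr rfl fun a _ => Finset.sum_congr rfl fun b _ => ?_
            have hUb : ∑ j, U a j * star (U b j) = if a = b then (1 : ℂ) else 0 := by
              have h := congrFun (congrFun hUU a) b
              simpa [Matrix.mul_apply, Matrix.star_apply, Matrix.one_apply] using h
            rw [hUb]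
        _ = ∑ a, star (V a i) * V a i := by
            refine Finset.sum_congr rfl fun a _ => ?_
            rw [Finset.sum_eq_single a
              (fun b _ hb => by
                by_cases h : g a = g b <;> simp [h, (Ne.symm hb : a ≠ b)])
              (fun h => absurd (Finset.mem_univ a) h)]
            simp
        _ = 1 := by
            have h := congrFun (congrFun hVV' i) i
            simpa [Matrix.mul_apply, Matrix.star_apply, Matrix.one_apply] using h
    have h2 : ((∑ j, w i j : ℝ) : ℂ) = ((1 : ℝ) : ℂ) := by push_cast; rw [hC]
    exact_mod_cast h2
  -- (iii) columns of w sum to 1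
  have hcol : ∀ j, ∑ i, w i j = 1 := by
    intro j
    have hC : ∑ i, (w i j : ℂ) = 1 := by
      calc ∑ i, (w i j : ℂ)
          = ∑ i, ∑ a, ∑ b, (if g a = g b then
              (star (V a i) * U a j) * star (star (V b i) * U b j) else 0) :=
            Finset.sum_congr rfl fun i _ => hwC i j
        _ = ∑ a, ∑ b, ∑ i, (if g a = g b then
              (star (V a i) * U a j) * star (star (V b i) * U b j) else 0) := by
            rw [Finset.sum_comm]
            refine Finset.sum_congr rfl fun a _ => Finset.sum_comm
        _ = ∑ a, ∑ b, (if g a = g b then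
              (U a j * star (U b j)) * ∑ i, star (V a i) * V b i else 0) := by
            refine Finset.sum_congr rfl fun a _ => Finset.sum_congr rfl fun b _ => ?_
            by_cases h : g a = g b
            · simp only [if_pos h, Finset.mul_sum]
              refine Finset.sum_congr rfl fun i _ => ?_
              simp only [star_mul', star_star]
              ring
            · simp [h]
        _ = ∑ a, ∑ b, (if g a = g b then
              (U a j * star (U b j)) * (if b = a then 1 else 0) else 0) := by
            refine Finset.sum_congr rfl fun a _ => Finset.sum_congr rfl fun b _ => ?_
            have hVb : ∑ i, star (V a i) * V b i = if b = a then (1 : ℂ) else 0 := by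
              have h := congrFun (congrFun hVV b) a
              simp only [Matrix.mul_apply, Matrix.star_apply, Matrix.one_apply] at h
              rw [← h]
              exact Finset.sum_congr rfl fun i _ => mul_comm _ _
            rw [hVb]
        _ = ∑ a, U a j * star (U a j) := by
            refine Finset.sum_congr rfl fun a _ => ?_
            rw [Finset.sum_eq_single a
              (fun b _ hb => by
                by_cases h : g a = g b <;> simp [h, (hb : b ≠ a)])
              (fun h => absurd (Finset.mem_univ a) h)]
            simp
        _ = 1 := by
            have h := congrFun (congrFun hUU' j) j
            simpa [Matrix.mul_apply, Matrix.star_apply, Matrix.one_apply, mul_comm] using h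
    have h2 : ((∑ i, w i j : ℝ) : ℂ) = ((1 : ℝ) : ℂ) := by push_cast; rw [hC]
    exact_mod_cast h2
  -- Jensen's inequality
  have hlam_nonneg : ∀ j, 0 ≤ lam j := fun j => hρ.eigenvalues_nonneg j
  have hjensen : ∀ i, ∑ j, w i j * Real.negMulLog (lam j) ≤ Real.negMulLog (mu i) := by
    intro i
    have h := Real.concaveOn_negMulLog.le_map_sum
      (fun j (_ : j ∈ Finset.univ) => hw_nonneg i j) (hrow i)
      (fun j _ => Set.mem_Ici.mpr (hlam_nonneg j))
    rw [hmusum i]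
    simpa [smul_eq_mul] using h
  have hEta : entEta = Real.negMulLog := rfl
  simp only [vnEntropy, dif_pos hA, dif_pos hB]
  show ∑ j, entEta (lam j) ≤ ∑ i, entEta (mu i)
  rw [hEta]
  calc ∑ j, Real.negMulLog (lam j)
      = ∑ j, (∑ i, w i j) * Real.negMulLog (lam j) := by
        refine Finset.sum_congr rfl fun j _ => ?_
        rw [hcol j, one_mul]
    _ = ∑ j, ∑ i, w i j * Real.negMulLog (lam j) :=
        Finset.sum_congr rfl fun j _ => Finset.sum_mul _ _ _
    _ = ∑ i, ∑ j, w i j * Real.negMulLog (lam j) := Finset.sum_comm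
    _ ≤ ∑ i, Real.negMulLog (mu i) := Finset.sum_le_sum fun i _ => hjensen i

/-- pinching by a finer partition does not decrease the von Neumann
entropy; in particular pinching does not decrease entropy, and S(Δρ) ≥ S(Πρ). -/
theorem vnEntropy_pinch_mono {I : Type*} [Fintype I] [DecidableEq I]
    {α β : Type*} [DecidableEq α] [DecidableEq β]
    (ρ : Matrix I I ℂ) (hρ : IsDensityMatrix ρ) (f : I → α) (g : I → β)
    (hrefine : ∀ i j, g i = g j → f i = f j) :
    vnEntropy (pinch f ρ) ≤ vnEntropy (pinch g ρ) ∧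
    vnEntropy ρ ≤ vnEntropy (pinch g ρ) ∧
    (∀ (s r : ℕ) (σ : Matrix (Fin s × Fin r) (Fin s × Fin r) ℂ), IsDensityMatrix σ →
      ∀ (ES : Fin s → ℤ) (ER : Fin r → ℤ),
        vnEntropy (pinch (globalE ES ER) σ) ≤ vnEntropy (pinch (localE ES ER) σ)) := by
  refine ⟨?_, vnEntropy_le_vnEntropy_pinch hρ.2.1 g, ?_⟩
  · rw [← pinch_pinch f g hrefine ρ]
    exact vnEntropy_le_vnEntropy_pinch (pinch_posSemidef hρ.2.1 f) g
  · intro s r σ hσ ES ER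
    have href : ∀ p q : Fin s × Fin r, localE ES ER p = localE ES ER q →
        globalE ES ER p = globalE ES ER q := by
      intro p q h
      simp only [localE, Prod.mk.injEq] at h
      simp only [globalE, h.1, h.2]
    rw [← pinch_pinch (globalE ES ER) (localE ES ER) href σ]
    exact vnEntropy_le_vnEntropy_pinch (pinch_posSemidef hσ.2.1 (globalE ES ER)) (localE ES ER)
end

section
/- (High reference localization.) Let d ≥ 1, s = 2 with E_S(m) = m, and r = d with E_R(n) = n. Let ρ_S be the 2×2 matrix with all entries 1/2 (the state |+⟩⟨+|), and let ρ_R be the d×d matrix with all entries 1/d (the maximally coherent clock state). Then A(ρ_S) = log 2, A(ρ_R) = log d, A(ρ_S ⊗ ρ_R) = log d + (log 2)/d, and the mutual asymmetry is A(ρ_S) + A(ρ_R) − A(ρ_S ⊗ ρ_R) = (1 − 1/d)·log 2. -/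
open Matrix Kronecker BigOperators ComplexOrder

lemma eig_ne_vec {n : Type*} [Fintype n] [DecidableEq n] {A : Matrix n n ℂ} (hA : A.IsHermitian)
    (i : n) : ⇑(hA.eigenvectorBasis i) ≠ 0 := by
  intro h
  exact hA.eigenvectorBasis.orthonormal.ne_zero i (by ext j; exact congrFun h j)

lemma eig_vec_complex {n : Type*} [Fintype n] [DecidableEq n] {A : Matrix n n ℂ}
    (hA : A.IsHermitian) (i : n) :
    A *ᵥ ⇑(hA.eigenvectorBasis i) = (hA.eigenvalues i : ℂ) • ⇑(hA.eigenvectorBasis i) := by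
  rw [hA.mulVec_eigenvectorBasis]
  ext j
  simp [Complex.real_smul]

lemma eig_quad {n : Type*} [Fintype n] [DecidableEq n] {A : Matrix n n ℂ} (hA : A.IsHermitian)
    (h2 : A * A = A) (i : n) :
    (hA.eigenvalues i : ℂ)^2 = (hA.eigenvalues i : ℂ) := by
  have hv := eig_vec_complex hA i
  set v := ⇑(hA.eigenvectorBasis i)
  set l := (hA.eigenvalues i : ℂ)
  have h2' : (A * A) *ᵥ v = (l^2) • v := by
    rw [← Matrix.mulVec_mulVec, hv, Matrix.mulVec_smul, hv, smul_smul]; congr 1; ring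
  rw [h2, hv] at h2'
  have h := sub_eq_zero.2 h2'
  rw [← sub_smul, smul_eq_zero] at h
  rcases h with h | h
  · linear_combination -h
  · exact absurd h (eig_ne_vec hA i)

lemma eig_scalar {n : Type*} [Fintype n] [DecidableEq n] (c : ℝ)
    (hA : ((c : ℂ) • (1 : Matrix n n ℂ)).IsHermitian) (i : n) : hA.eigenvalues i = c := by
  have hv := eig_vec_complex hA i
  rw [Matrix.smul_mulVec, Matrix.one_mulVec] at hv
  have h := sub_eq_zero.2 hv
  rw [← sub_smul, smul_eq_zero] at h
  rcases h with h | h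
  · exact_mod_cast (sub_eq_zero.1 h).symm
  · exact absurd h (eig_ne_vec hA i)

lemma eig_cubic {n : Type*} [Fintype n] [DecidableEq n] {A : Matrix n n ℂ} (hA : A.IsHermitian)
    (a b : ℂ) (h3 : A * A * A = a • (A * A) + b • A) (i : n) :
    (hA.eigenvalues i : ℂ)^3 = a * (hA.eigenvalues i : ℂ)^2 + b * (hA.eigenvalues i : ℂ) := by
  have hv := eig_vec_complex hA i
  set v := ⇑(hA.eigenvectorBasis i)
  set l := (hA.eigenvalues i : ℂ)
  have h2' : (A * A) *ᵥ v = (l^2) • v := by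
    rw [← Matrix.mulVec_mulVec, hv, Matrix.mulVec_smul, hv, smul_smul]; congr 1; ring
  have h3' : (A * A * A) *ᵥ v = (l^3) • v := by
    rw [← Matrix.mulVec_mulVec, hv, Matrix.mulVec_smul, h2', smul_smul]; congr 1; ring
  rw [h3, Matrix.add_mulVec, Matrix.smul_mulVec, Matrix.smul_mulVec, h2', hv,
    smul_smul, smul_smul, ← add_smul] at h3'
  have h := sub_eq_zero.2 h3'
  rw [← sub_smul, smul_eq_zero] at h
  rcases h with h | h
  · linear_combination -h
  · exact absurd h (eig_ne_vec hA i)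

lemma sum_eig {n : Type*} [Fintype n] [DecidableEq n] {A : Matrix n n ℂ} (hA : A.IsHermitian) :
    ∑ i, (hA.eigenvalues i : ℂ) = A.trace := by
  conv_rhs => rw [hA.spectral_theorem, Unitary.conjStarAlgAut_apply]
  rw [Matrix.trace_mul_cycle,
    (Matrix.mem_unitaryGroup_iff').mp (IsHermitian.eigenvectorUnitary hA).2, Matrix.one_mul,
    Matrix.trace_diagonal]
  rfl

lemma sum_eig_sq {n : Type*} [Fintype n] [DecidableEq n] {A : Matrix n n ℂ} (hA : A.IsHermitian) :
    ∑ i, (hA.eigenvalues i : ℂ)^2 = (A * A).trace := by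
  conv_rhs => rw [hA.spectral_theorem, Unitary.conjStarAlgAut_apply]
  rw [show ∀ (U D : Matrix n n ℂ), (U * D * star U) * (U * D * star U)
      = U * (D * (star U * U) * D) * star U by intros; noncomm_ring]
  rw [(Matrix.mem_unitaryGroup_iff').mp (IsHermitian.eigenvectorUnitary hA).2, Matrix.mul_one,
    Matrix.trace_mul_cycle,
    (Matrix.mem_unitaryGroup_iff').mp (IsHermitian.eigenvectorUnitary hA).2, Matrix.one_mul,
    Matrix.diagonal_mul_diagonal, Matrix.trace_diagonal]
  simp [sq]

lemma entEta_zero : entEta 0 = 0 := by simp [entEta]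
lemma entEta_one : entEta 1 = 0 := by simp [entEta]

lemma vnEntropy_of_idem {n : Type*} [Fintype n] [DecidableEq n] {A : Matrix n n ℂ}
    (hA : A.IsHermitian) (h2 : A * A = A) : vnEntropy A = 0 := by
  rw [vnEntropy, dif_pos hA]
  apply Finset.sum_eq_zero
  intro i _
  have h := eig_quad hA h2 i
  have h' : (hA.eigenvalues i)^2 = hA.eigenvalues i := by exact_mod_cast h
  have : hA.eigenvalues i = 0 ∨ hA.eigenvalues i = 1 := by
    rcases mul_eq_zero.1 (show hA.eigenvalues i * (hA.eigenvalues i - 1) = 0 by nlinarith) with h | h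
    · exact Or.inl h
    · exact Or.inr (by linarith)
  rcases this with h | h <;> rw [h]
  · exact entEta_zero
  · exact entEta_one

lemma vnEntropy_smul_one {n : Type*} [Fintype n] [DecidableEq n] (c : ℝ) :
    vnEntropy ((c : ℂ) • (1 : Matrix n n ℂ)) = (Fintype.card n) * entEta c := by
  have hA : ((c : ℂ) • (1 : Matrix n n ℂ)).IsHermitian := by
    unfold Matrix.IsHermitian
    rw [Matrix.conjTranspose_smul, Matrix.conjTranspose_one]
    simp [Complex.conj_ofReal]
  rw [vnEntropy, dif_pos hA]
  rw [Finset.sum_congr rfl fun i _ => by rw [eig_scalar c hA i]]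
  simp [Finset.card_univ, mul_comm]

section Counting

lemma sum_fin_indicator (d : ℕ) (v : ℤ) (x : ℂ) :
    ∑ n : Fin d, (if (n.val : ℤ) = v then x else 0) = if 0 ≤ v ∧ v < d then x else 0 := by
  by_cases h : 0 ≤ v ∧ v < d
  · obtain ⟨h1, h2⟩ := h
    have hv : v.toNat < d := by omega
    rw [if_pos ⟨h1, h2⟩, Finset.sum_eq_single (⟨v.toNat, hv⟩ : Fin d)]
    · rw [if_pos (by simp; omega)]
    · intro b _ hb
      rw [if_neg]
      intro hc
      exact hb (by apply Fin.ext; simp; omega)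
    · intro h; exact absurd (Finset.mem_univ _) h
  · rw [if_neg h]
    apply Finset.sum_eq_zero
    intro n _
    rw [if_neg]
    have := n.isLt
    omega

lemma sum_pair (d : ℕ) (x : ℂ) (a b : ℤ) (hab : (a - b).natAbs ≤ d) :
    ∑ n : Fin d, ∑ m : Fin d, (if a + (n.val : ℤ) = b + (m.val : ℤ) then x else 0)
      = ((d - (a - b).natAbs : ℕ) : ℂ) * x := by
  have h1 : ∀ n : Fin d, ∑ m : Fin d, (if a + (n.val : ℤ) = b + (m.val : ℤ) then x else 0)
      = if 0 ≤ a + n.val - b ∧ a + n.val - b < d then x else 0 := by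
    intro n
    rw [← sum_fin_indicator d (a + n.val - b) x]
    exact Finset.sum_congr rfl fun m _ => if_congr (by omega) rfl rfl
  rw [Finset.sum_congr rfl fun n _ => h1 n]
  rw [Fin.sum_univ_eq_sum_range
    (fun j => if 0 ≤ a + (j : ℤ) - b ∧ a + (j : ℤ) - b < d then x else 0) d]
  rw [← Finset.sum_filter]
  have hfe : (Finset.range d).filter (fun j : ℕ => 0 ≤ a + (j : ℤ) - b ∧ a + (j : ℤ) - b < d)
      = Finset.Ico ((b - a).toNat) (min ((b - a + d).toNat) d) := by
    ext j
    simp only [Finset.mem_filter, Finset.mem_Ico, Finset.mem_range]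
    omega
  rw [hfe, Finset.sum_const, Nat.card_Ico, nsmul_eq_mul]
  have : min ((b - a + d).toNat) d - (b - a).toNat = d - (a - b).natAbs := by omega
  rw [this]

lemma global_count (d : ℕ) (hd : 1 ≤ d) (x : ℂ) :
    ∑ p : Fin 2 × Fin d, ∑ q : Fin 2 × Fin d,
      (if (p.1.val : ℤ) + p.2.val = (q.1.val : ℤ) + q.2.val then x else 0)
      = (4 * d - 2 : ℂ) * x := by
  rw [Fintype.sum_prod_type]
  simp only [Fintype.sum_prod_type]
  conv_lhs => enter [2, m]; rw [Finset.sum_comm]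
  simp only [Fin.sum_univ_two, Fin.val_zero, Fin.val_one, Nat.cast_zero, Nat.cast_one]
  rw [sum_pair d x 0 0 (by simpa using hd.le'.trans hd), sum_pair d x 0 1 (by simpa using hd),
    sum_pair d x 1 0 (by simpa using hd), sum_pair d x 1 1 (by simpa using hd)]
  have h1 : ((0 : ℤ) - 0).natAbs = 0 := rfl
  have h2 : ((0 : ℤ) - 1).natAbs = 1 := rfl
  have h3 : ((1 : ℤ) - 0).natAbs = 1 := rfl
  have h4 : ((1 : ℤ) - 1).natAbs = 0 := rfl
  rw [h1, h2, h3, h4, Nat.sub_zero, Nat.cast_sub hd]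
  push_cast
  ring

end Counting

section PinchC

variable {I : Type*} [Fintype I] [DecidableEq I] {α : Type*} [DecidableEq α]

/-- number of indices in the same pinching block as `i` -/
def pinchN (f : I → α) (i : I) : ℕ := (Finset.univ.filter fun k => f k = f i).card

lemma pinchN_pos (f : I → α) (i : I) : 1 ≤ pinchN f i := by
  rw [pinchN, Nat.one_le_iff_ne_zero, ← Nat.pos_iff_ne_zero, Finset.card_pos]
  exact ⟨i, by simp⟩

lemma pinchC_herm (f : I → α) (cR : ℝ) :
    (Matrix.of fun i j => if f i = f j then (cR : ℂ) else 0).IsHermitian := by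
  ext i j
  simp only [Matrix.conjTranspose_apply, Matrix.of_apply]
  by_cases h : f i = f j
  · rw [if_pos h.symm, if_pos h, RCLike.star_def, Complex.conj_ofReal]
  · rw [if_neg (fun hc => h hc.symm), if_neg h, star_zero]

lemma pinchC_mul (f : I → α) (c : ℂ) :
    (Matrix.of fun i j => if f i = f j then c else 0) *
      (Matrix.of fun i j => if f i = f j then c else 0)
    = Matrix.of fun i j => if f i = f j then (pinchN f i : ℂ) * c ^ 2 else 0 := by
  ext i j
  rw [Matrix.mul_apply, Matrix.of_apply]
  by_cases h : f i = f j
  · rw [if_pos h]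
    calc ∑ k, (Matrix.of fun i j => if f i = f j then c else 0) i k *
          (Matrix.of fun i j => if f i = f j then c else 0) k j
        = ∑ k, (if f k = f i then c ^ 2 else 0) := by
          apply Finset.sum_congr rfl
          intro k _
          by_cases hk : f k = f i
          · rw [Matrix.of_apply, Matrix.of_apply, if_pos hk.symm, if_pos (hk.trans h),
              if_pos hk, sq]
          · rw [Matrix.of_apply, Matrix.of_apply, if_neg (fun hc => hk hc.symm), zero_mul,
              if_neg hk]
      _ = (pinchN f i : ℂ) * c ^ 2 := by
          rw [← Finset.sum_filter, Finset.sum_const, pinchN, nsmul_eq_mul]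
  · rw [if_neg h]
    apply Finset.sum_eq_zero
    intro k _
    rw [Matrix.of_apply, Matrix.of_apply]
    by_cases hk : f i = f k
    · rw [if_neg (fun hc => h (hk.trans hc)), mul_zero]
    · rw [if_neg hk, zero_mul]

lemma pinchC_cube (f : I → α) (c : ℂ) :
    (Matrix.of fun i j => if f i = f j then c else 0) *
      (Matrix.of fun i j => if f i = f j then c else 0) *
      (Matrix.of fun i j => if f i = f j then c else 0)
    = Matrix.of fun i j => if f i = f j then ((pinchN f i : ℂ)) ^ 2 * c ^ 3 else 0 := by
  rw [pinchC_mul]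
  ext i j
  rw [Matrix.mul_apply, Matrix.of_apply]
  by_cases h : f i = f j
  · rw [if_pos h]
    calc ∑ k, (Matrix.of fun i j => if f i = f j then (pinchN f i : ℂ) * c ^ 2 else 0) i k *
          (Matrix.of fun i j => if f i = f j then c else 0) k j
        = ∑ k, (if f k = f i then (pinchN f i : ℂ) * c ^ 3 else 0) := by
          apply Finset.sum_congr rfl
          intro k _
          by_cases hk : f k = f i
          · rw [Matrix.of_apply, Matrix.of_apply, if_pos hk.symm, if_pos (hk.trans h),
              if_pos hk]
            ring
          · rw [Matrix.of_apply, Matrix.of_apply, if_neg (fun hc => hk hc.symm), zero_mul,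
              if_neg hk]
      _ = ((pinchN f i : ℂ)) ^ 2 * c ^ 3 := by
          rw [← Finset.sum_filter, Finset.sum_const, pinchN, nsmul_eq_mul]
          ring
  · rw [if_neg h]
    apply Finset.sum_eq_zero
    intro k _
    rw [Matrix.of_apply, Matrix.of_apply]
    by_cases hk : f i = f k
    · rw [if_neg (fun hc => h (hk.trans hc)), mul_zero]
    · rw [if_neg hk, zero_mul]

lemma pinchC_rel (f : I → α) (c : ℂ) (hN : ∀ i, pinchN f i = 1 ∨ pinchN f i = 2) :
    (Matrix.of fun i j => if f i = f j then c else 0) *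
      (Matrix.of fun i j => if f i = f j then c else 0) *
      (Matrix.of fun i j => if f i = f j then c else 0)
    = (3 * c) • ((Matrix.of fun i j => if f i = f j then c else 0) *
        (Matrix.of fun i j => if f i = f j then c else 0))
      + (-2 * c ^ 2) • (Matrix.of fun i j => if f i = f j then c else 0) := by
  rw [pinchC_cube, pinchC_mul]
  ext i j
  simp only [Matrix.add_apply, Matrix.smul_apply, Matrix.of_apply, smul_eq_mul]
  by_cases h : f i = f j
  · rw [if_pos h, if_pos h, if_pos h]
    rcases hN i with hn | hn <;> rw [hn] <;> push_cast <;> ring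
  · simp [h]

lemma pinchC_trace (f : I → α) (c : ℂ) :
    (Matrix.of fun i j => if f i = f j then c else 0).trace = (Fintype.card I : ℂ) * c := by
  simp [Matrix.trace, Matrix.diag, Finset.card_univ, mul_comm]

lemma pinchC_trace_sq (f : I → α) (c : ℂ) :
    ((Matrix.of fun i j => if f i = f j then c else 0) *
      (Matrix.of fun i j => if f i = f j then c else 0)).trace
    = (∑ i, (pinchN f i : ℂ)) * c ^ 2 := by
  rw [pinchC_mul]
  simp [Matrix.trace, Matrix.diag, Finset.sum_mul]

end PinchC

lemma pinchN_le_two (d : ℕ) (i : Fin 2 × Fin d) :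
    pinchN (fun p : Fin 2 × Fin d => (p.1.val : ℤ) + p.2.val) i ≤ 2 := by
  rw [pinchN]
  refine le_trans (Finset.card_le_card_of_injOn Prod.fst (fun _ _ => Finset.mem_univ _) ?_)
    (by simp)
  intro a ha b hb hab
  simp only [Finset.coe_filter, Finset.mem_univ, true_and, Set.mem_setOf_eq] at ha hb
  have hv : a.1.val = b.1.val := congrArg Fin.val hab
  exact Prod.ext hab (Fin.ext (by omega))

section ConstMat

lemma const_herm {I : Type*} [Fintype I] [DecidableEq I] (cR : ℝ) :
    (Matrix.of fun _ _ => (cR : ℂ) : Matrix I I ℂ).IsHermitian := by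
  ext i j
  simp [Matrix.conjTranspose_apply, Complex.conj_ofReal]

lemma const_idem {I : Type*} [Fintype I] [DecidableEq I] (c : ℂ)
    (hc : (Fintype.card I : ℂ) * c = 1) :
    (Matrix.of fun _ _ => c : Matrix I I ℂ) * (Matrix.of fun _ _ => c) =
      (Matrix.of fun _ _ => c) := by
  ext i j
  rw [Matrix.mul_apply]
  simp only [Matrix.of_apply]
  rw [Finset.sum_const, Finset.card_univ, nsmul_eq_mul, ← mul_assoc, hc, one_mul]

end ConstMat

/-- high reference localization: with a qubit system and a
d-dimensional maximally coherent clock, the mutual asymmetry is (1 − 1/d)·log 2. -/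
theorem high_reference_localization (d : ℕ) (hd : 1 ≤ d)
    (ρS : Matrix (Fin 2) (Fin 2) ℂ) (hρS : ρS = Matrix.of fun _ _ => 1 / 2)
    (ρR : Matrix (Fin d) (Fin d) ℂ) (hρR : ρR = Matrix.of fun _ _ => 1 / (d : ℂ))
    (ES : Fin 2 → ℤ) (hES : ES = fun m => (m.val : ℤ))
    (ER : Fin d → ℤ) (hER : ER = fun n => (n.val : ℤ)) :
    asym ES ρS = Real.log 2 ∧
    asym ER ρR = Real.log d ∧
    asym (globalE ES ER) (ρS ⊗ₖ ρR) = Real.log d + Real.log 2 / d ∧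
    asym ES ρS + asym ER ρR - asym (globalE ES ER) (ρS ⊗ₖ ρR) =
      (1 - 1 / (d : ℝ)) * Real.log 2 := by
  subst hρS hρR hES hER
  have hd0R : (d : ℝ) ≠ 0 := Nat.cast_ne_zero.2 (by omega)
  have hd0C : (d : ℂ) ≠ 0 := Nat.cast_ne_zero.2 (by omega)
  -- the system state and its pinch
  have hρS' : (Matrix.of fun _ _ => (1/2 : ℂ) : Matrix (Fin 2) (Fin 2) ℂ)
      = Matrix.of fun _ _ => (((1/2 : ℝ)) : ℂ) := by norm_num
  have hS0 : vnEntropy (Matrix.of fun _ _ => (1/2 : ℂ) : Matrix (Fin 2) (Fin 2) ℂ) = 0 := by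
    rw [hρS']
    exact vnEntropy_of_idem (const_herm _) (const_idem _ (by push_cast; norm_num))
  have hPS : pinch (fun m : Fin 2 => (m.val : ℤ)) (Matrix.of fun _ _ => (1/2 : ℂ))
      = ((1/2 : ℝ) : ℂ) • (1 : Matrix (Fin 2) (Fin 2) ℂ) := by
    ext i j
    simp only [pinch, Matrix.of_apply, Matrix.smul_apply, Matrix.one_apply]
    by_cases h : i = j
    · subst h; rw [if_pos rfl, if_pos rfl]; norm_num
    · rw [if_neg (fun hc => h (Fin.ext (by exact_mod_cast hc))), if_neg h, smul_zero]
  have hA1 : asym (fun m : Fin 2 => (m.val : ℤ)) (Matrix.of fun _ _ => (1/2 : ℂ))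
      = Real.log 2 := by
    rw [asym, hS0, hPS, vnEntropy_smul_one, entEta]
    rw [Fintype.card_fin, one_div, Real.log_inv]
    ring
  -- the reference state and its pinch
  have hρR' : (Matrix.of fun _ _ => (1/(d : ℂ)) : Matrix (Fin d) (Fin d) ℂ)
      = Matrix.of fun _ _ => ((1/(d : ℝ) : ℝ) : ℂ) := by push_cast; ring
  have hR0 : vnEntropy (Matrix.of fun _ _ => (1/(d : ℂ)) : Matrix (Fin d) (Fin d) ℂ) = 0 := by
    rw [hρR']
    refine vnEntropy_of_idem (const_herm ((1:ℝ)/(d:ℝ))) (const_idem _ ?_)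
    rw [Fintype.card_fin]
    push_cast
    field_simp
  have hPR : pinch (fun n : Fin d => (n.val : ℤ)) (Matrix.of fun _ _ => (1/(d : ℂ)))
      = ((1/(d : ℝ) : ℝ) : ℂ) • (1 : Matrix (Fin d) (Fin d) ℂ) := by
    ext i j
    simp only [pinch, Matrix.of_apply, Matrix.smul_apply, Matrix.one_apply]
    by_cases h : i = j
    · subst h; rw [if_pos rfl, if_pos rfl, smul_eq_mul]; push_cast; ring
    · rw [if_neg (fun hc => h (Fin.ext (by exact_mod_cast hc))), if_neg h, smul_zero]
  have hA2 : asym (fun n : Fin d => (n.val : ℤ)) (Matrix.of fun _ _ => (1/(d : ℂ)))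
      = Real.log d := by
    rw [asym, hR0, hPR, vnEntropy_smul_one, entEta]
    rw [Fintype.card_fin, one_div, Real.log_inv]
    field_simp
    ring
  -- the joint state
  set F : Fin 2 × Fin d → ℤ := fun p => (p.1.val : ℤ) + p.2.val with hF
  set cR : ℝ := 1/(2*(d : ℝ)) with hcR
  have hKron : (Matrix.of fun _ _ => (1/2 : ℂ) : Matrix (Fin 2) (Fin 2) ℂ) ⊗ₖ
      (Matrix.of fun _ _ => (1/(d : ℂ)) : Matrix (Fin d) (Fin d) ℂ)
      = Matrix.of fun _ _ => ((cR : ℝ) : ℂ) := by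
    ext p q
    simp only [Matrix.kroneckerMap_apply, Matrix.of_apply, hcR]
    push_cast
    ring
  have hcard : (Fintype.card (Fin 2 × Fin d) : ℂ) = 2 * d := by
    simp [Fintype.card_prod]
  have hK0 : vnEntropy (Matrix.of fun _ _ => ((cR : ℝ) : ℂ) : Matrix (Fin 2 × Fin d) _ ℂ)
      = 0 := by
    refine vnEntropy_of_idem (const_herm _) (const_idem _ ?_)
    rw [hcard, hcR]
    push_cast
    field_simp
  set M : Matrix (Fin 2 × Fin d) (Fin 2 × Fin d) ℂ :=
    Matrix.of fun p q => if F p = F q then ((cR : ℝ) : ℂ) else 0 with hM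
  have hGF : globalE (fun m : Fin 2 => (m.val : ℤ)) (fun n : Fin d => (n.val : ℤ)) = F := rfl
  have hpinchM : pinch (globalE (fun m : Fin 2 => (m.val : ℤ)) (fun n : Fin d => (n.val : ℤ)))
      (Matrix.of fun _ _ => ((cR : ℝ) : ℂ)) = M := by
    ext p q
    simp only [pinch, Matrix.of_apply, hM, hGF]
  have hMh : M.IsHermitian := pinchC_herm F cR
  have hN12 : ∀ p, pinchN F p = 1 ∨ pinchN F p = 2 := by
    intro p
    have h1 := pinchN_pos F p
    have h2 : pinchN F p ≤ 2 := pinchN_le_two d p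
    omega
  have hNsum : ∑ p, (pinchN F p : ℂ) = 4 * d - 2 := by
    have hform : ∀ p, (pinchN F p : ℂ)
        = ∑ q, (if F p = F q then (1 : ℂ) else 0) := by
      intro p
      rw [pinchN, Finset.card_filter]
      push_cast
      exact Finset.sum_congr rfl fun q _ => if_congr eq_comm rfl rfl
    rw [Finset.sum_congr rfl fun p _ => hform p]
    rw [global_count d hd 1, mul_one]
  have htr : M.trace = 1 := by
    rw [hM, pinchC_trace, hcard, hcR]
    push_cast
    field_simp
  have hsum1 : ∑ i, hMh.eigenvalues i = 1 := by
    have h := sum_eig hMh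
    rw [htr] at h
    exact_mod_cast h
  have hsum2 : ∑ i, (hMh.eigenvalues i)^2 = (4*(d : ℝ) - 2) * cR^2 := by
    have h := sum_eig_sq hMh
    have h2 : (M * M).trace = (4*(d : ℂ) - 2) * ((cR : ℝ) : ℂ)^2 := by
      rw [hM, pinchC_trace_sq, hNsum]
    rw [h2] at h
    exact_mod_cast h
  have hrel := pinchC_rel F ((cR : ℝ) : ℂ) hN12
  have hcase : ∀ i, hMh.eigenvalues i = 0 ∨ hMh.eigenvalues i = cR
      ∨ hMh.eigenvalues i = 2*cR := by
    intro i
    have hc := eig_cubic hMh (3 * ((cR : ℝ) : ℂ)) (-2 * ((cR : ℝ) : ℂ)^2) hrel i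
    have hfac : (hMh.eigenvalues i : ℂ) * ((hMh.eigenvalues i : ℂ) - (cR : ℂ)) *
        ((hMh.eigenvalues i : ℂ) - 2*(cR : ℂ)) = 0 := by linear_combination hc
    rcases mul_eq_zero.1 hfac with h' | h'
    · rcases mul_eq_zero.1 h' with h0 | h1
      · left; exact_mod_cast h0
      · right; left; exact_mod_cast sub_eq_zero.1 h1
    · right; right
      have := sub_eq_zero.1 h'
      exact_mod_cast this
  have hlogcR : Real.log cR = -(Real.log 2 + Real.log d) := by
    rw [hcR, one_div, Real.log_inv, Real.log_mul two_ne_zero hd0R]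
  have hlog2cR : Real.log (2*cR) = -(Real.log d) := by
    rw [show 2*cR = ((d : ℝ))⁻¹ by rw [hcR]; field_simp, Real.log_inv]
  have hpt : ∀ i, entEta (hMh.eigenvalues i)
      = (Real.log d + 2*Real.log 2) * hMh.eigenvalues i
        + (-(2*(d : ℝ)*Real.log 2)) * (hMh.eigenvalues i)^2 := by
    intro i
    rcases hcase i with h | h | h <;> rw [h, entEta]
    · simp
    · rw [hlogcR, hcR]; field_simp; ring
    · rw [hlog2cR, hcR]; field_simp; ring
  have hvnM : vnEntropy M = Real.log d + Real.log 2 / d := by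
    rw [vnEntropy, dif_pos hMh, Finset.sum_congr rfl fun i _ => hpt i,
      Finset.sum_add_distrib, ← Finset.mul_sum, ← Finset.mul_sum, hsum1, hsum2, hcR]
    field_simp
    ring
  have hA3 : asym (globalE (fun m : Fin 2 => (m.val : ℤ)) (fun n : Fin d => (n.val : ℤ)))
      ((Matrix.of fun _ _ => (1/2 : ℂ) : Matrix (Fin 2) (Fin 2) ℂ) ⊗ₖ
        (Matrix.of fun _ _ => (1/(d : ℂ)) : Matrix (Fin d) (Fin d) ℂ))
      = Real.log d + Real.log 2 / d := by
    rw [asym, hKron, hpinchM, hvnM, hK0, sub_zero]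
  refine ⟨hA1, hA2, hA3, ?_⟩
  rw [hA1, hA2, hA3]
  field_simp
  ring
end
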